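/- arXiv:1106.0048 — 2 statements merged into one kernel-verified Lean document; each statement's English description precedes it below -/
import Mathlib

section
/- Let K be the Erdős–Rényi random graph G(n,p) with n ≥ 2 and p ∈ (0,1), let Y be its number of isolated vertices, and let V' be a vertex chosen uniformly at random from {1,...,n}, independent of K. Let K^s be the graph obtained from K by deleting all edges incident to V', and let Y^s be the number of isolated vertices of K^s. Then Y^s has the Y-size biased distribution, i.e., E[Y f(Y)] = μ E[f(Y^s)] for all bounded functions f, where μ = E Y = n(1-p)^{n-1}; moreover Y^s ≥ Y almost surely. -/
open MeasureTheory ProbabilityTheory Real Finset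

noncomputable section

namespace ErdosRenyiIsolated

/-- Index set for the potential edges of a graph on `Fin n`. -/
abbrev EdgeIdx (n : ℕ) := {e : Fin n × Fin n // e.1 < e.2}

/-- Adjacency relation of the random graph encoded by `ω` : `u` and `v` are adjacent
if the corresponding edge indicator is `true`. -/
def adj {n : ℕ} (ω : EdgeIdx n → Bool) (u v : Fin n) : Prop :=
  if h : u < v then ω ⟨(u, v), h⟩ = true
  else if h' : v < u then ω ⟨(v, u), h'⟩ = true
  else False

instance {n : ℕ} (ω : EdgeIdx n → Bool) (u v : Fin n) : Decidable (adj ω u v) := by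
  unfold adj
  split
  · exact inferInstance
  · split
    · exact inferInstance
    · exact inferInstance

/-- Degree of vertex `v` in the graph encoded by `ω`. -/
def deg {n : ℕ} (ω : EdgeIdx n → Bool) (v : Fin n) : ℕ :=
  (Finset.univ.filter fun w => adj ω v w).card

/-- The number of isolated vertices of the graph encoded by `ω`. -/
def isolCount {n : ℕ} (ω : EdgeIdx n → Bool) : ℕ :=
  (Finset.univ.filter fun v => deg ω v = 0).card

/-- The Bernoulli(p) measure on `Bool`. -/
def bern (p : ℝ) : Measure Bool :=
  ENNReal.ofReal p • Measure.dirac true + ENNReal.ofReal (1 - p) • Measure.dirac false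

instance (p : ℝ) : IsFiniteMeasure (bern p) := by
  constructor
  have h : bern p Set.univ ≤ ENNReal.ofReal p + ENNReal.ofReal (1 - p) := by
    simp [bern]
  exact lt_of_le_of_lt h (ENNReal.add_lt_top.mpr ⟨ENNReal.ofReal_lt_top, ENNReal.ofReal_lt_top⟩)

/-- The Erdős–Rényi random graph measure `G(n,p)`: the edge indicators are i.i.d.
Bernoulli(p). -/
def gnp (n : ℕ) (p : ℝ) : Measure (EdgeIdx n → Bool) :=
  Measure.pi fun _ => bern p

/-- The Erdős–Rényi measure together with an independent uniformly chosen vertex. -/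
def gnpV (n : ℕ) (p : ℝ) : Measure ((EdgeIdx n → Bool) × Fin n) :=
  (gnp n p).prod (uniformOn (Set.univ : Set (Fin n)))

/-- Adjacency in the graph obtained by deleting all edges incident to `v'`. -/
def adjDel {n : ℕ} (ω : EdgeIdx n → Bool) (v' u v : Fin n) : Prop :=
  adj ω u v ∧ u ≠ v' ∧ v ≠ v'

instance {n : ℕ} (ω : EdgeIdx n → Bool) (v' u v : Fin n) : Decidable (adjDel ω v' u v) := by
  unfold adjDel; exact inferInstance

/-- Degree of `v` in the graph `ω` with all edges incident to `v'` deleted. -/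
def degDel {n : ℕ} (ω : EdgeIdx n → Bool) (v' v : Fin n) : ℕ :=
  (Finset.univ.filter fun w => adjDel ω v' v w).card

/-- Number of isolated vertices in the graph `ω` with all edges incident to `v'` deleted. -/
def isolCountDel {n : ℕ} (ω : EdgeIdx n → Bool) (v' : Fin n) : ℕ :=
  (Finset.univ.filter fun v => degDel ω v' v = 0).card

/-! ### Auxiliary machinery -/

/-- Weight of one edge indicator. -/
def w (p : ℝ) (b : Bool) : ℝ := if b then p else 1 - p

/-- Weight (probability) of a full configuration. -/
def W {n : ℕ} (p : ℝ) (ω : EdgeIdx n → Bool) : ℝ := ∏ e, w p (ω e)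

/-- `e` is incident to `v`. -/
def inc {n : ℕ} (v : Fin n) (e : EdgeIdx n) : Prop := e.1.1 = v ∨ e.1.2 = v

instance {n : ℕ} (v : Fin n) (e : EdgeIdx n) : Decidable (inc v e) := by
  unfold inc; infer_instance

/-- Delete all edges incident to `v`. -/
def kill {n : ℕ} (v : Fin n) (ω : EdgeIdx n → Bool) : EdgeIdx n → Bool :=
  fun e => if inc v e then false else ω e

lemma w_nonneg {p : ℝ} (hp0 : 0 ≤ p) (hp1 : p ≤ 1) (b : Bool) : 0 ≤ w p b := by
  unfold w; split <;> linarith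

lemma W_nonneg {n : ℕ} {p : ℝ} (hp0 : 0 ≤ p) (hp1 : p ≤ 1) (ω : EdgeIdx n → Bool) :
    0 ≤ W p ω :=
  Finset.prod_nonneg fun e _ => w_nonneg hp0 hp1 (ω e)

lemma sum_W_eq_one {ι : Type*} [Fintype ι] [DecidableEq ι] (p : ℝ) :
    ∑ g : ι → Bool, ∏ i, w p (g i) = 1 := by
  have h := Finset.prod_univ_sum (fun _ : ι => (univ : Finset Bool)) (fun _ b => w p b)
  rw [Fintype.piFinset_univ] at h
  rw [← h]
  have hb : (∑ b : Bool, w p b) = 1 := by simp [w]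
  simp only [hb, Finset.prod_const_one]

lemma bern_singleton (p : ℝ) (b : Bool) : bern p {b} = ENNReal.ofReal (w p b) := by
  cases b <;> simp [bern, w, Measure.dirac_apply]

lemma bern_prob {p : ℝ} (hp0 : 0 ≤ p) (hp1 : p ≤ 1) : IsProbabilityMeasure (bern p) := by
  refine ⟨?_⟩
  have h : bern p Set.univ = ENNReal.ofReal p + ENNReal.ofReal (1 - p) := by simp [bern]
  rw [h, ← ENNReal.ofReal_add hp0 (by linarith)]
  norm_num

lemma gnp_singleton {n : ℕ} {p : ℝ} (hp0 : 0 ≤ p) (hp1 : p ≤ 1) (ω : EdgeIdx n → Bool) :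
    gnp n p {ω} = ENNReal.ofReal (W p ω) := by
  have h1 : ({ω} : Set (EdgeIdx n → Bool)) = Set.univ.pi fun e => {ω e} :=
    (Set.univ_pi_singleton ω).symm
  rw [h1, gnp, Measure.pi_pi, W,
    ENNReal.ofReal_prod_of_nonneg (fun e _ => w_nonneg hp0 hp1 (ω e))]
  exact Finset.prod_congr rfl fun e _ => bern_singleton p (ω e)

lemma integral_gnp {n : ℕ} {p : ℝ} (hp0 : 0 ≤ p) (hp1 : p ≤ 1)
    (g : (EdgeIdx n → Bool) → ℝ) :
    ∫ ω, g ω ∂(gnp n p) = ∑ ω, W p ω * g ω := by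
  haveI := bern_prob hp0 hp1
  haveI : IsProbabilityMeasure (gnp n p) := by unfold gnp; infer_instance
  rw [integral_fintype (Integrable.of_finite)]
  refine Finset.sum_congr rfl fun ω _ => ?_
  rw [measureReal_def, gnp_singleton hp0 hp1, ENNReal.toReal_ofReal (W_nonneg hp0 hp1 ω), smul_eq_mul]

lemma uniform_singleton {n : ℕ} (v : Fin n) :
    uniformOn (Set.univ : Set (Fin n)) {v} = (n : ENNReal)⁻¹ := by
  rw [uniformOn, cond_apply MeasurableSet.univ]
  simp [Measure.count_univ, Measure.count_singleton, Fintype.card_fin]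

lemma integral_gnpV {n : ℕ} (hn : 0 < n) {p : ℝ} (hp0 : 0 ≤ p) (hp1 : p ≤ 1)
    (g : (EdgeIdx n → Bool) × Fin n → ℝ) :
    ∫ x, g x ∂(gnpV n p) = ∑ ω, ∑ v : Fin n, (n : ℝ)⁻¹ * (W p ω * g (ω, v)) := by
  haveI := bern_prob hp0 hp1
  haveI : IsProbabilityMeasure (gnp n p) := by unfold gnp; infer_instance
  haveI : Nonempty (Fin n) := ⟨⟨0, hn⟩⟩
  haveI : IsProbabilityMeasure (uniformOn (Set.univ : Set (Fin n))) :=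
    uniformOn_isProbabilityMeasure Set.finite_univ Set.univ_nonempty
  haveI : IsFiniteMeasure (gnpV n p) := by
    unfold gnpV
    infer_instance
  rw [integral_fintype (Integrable.of_finite), Fintype.sum_prod_type]
  refine Finset.sum_congr rfl fun ω _ => Finset.sum_congr rfl fun v _ => ?_
  have h1 : ({(ω, v)} : Set ((EdgeIdx n → Bool) × Fin n)) = {ω} ×ˢ {v} := by
    rw [Set.singleton_prod_singleton]
  rw [measureReal_def, h1, gnpV, Measure.prod_prod, gnp_singleton hp0 hp1, uniform_singleton,
    ENNReal.toReal_mul, ENNReal.toReal_ofReal (W_nonneg hp0 hp1 ω),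
    ENNReal.toReal_inv, smul_eq_mul]
  have h2 : ((n : ENNReal)).toReal = (n : ℝ) := rfl
  rw [h2]
  ring

lemma adj_kill {n : ℕ} (ω : EdgeIdx n → Bool) (v' u v : Fin n) :
    adj (kill v' ω) u v ↔ adj ω u v ∧ u ≠ v' ∧ v ≠ v' := by
  rcases lt_trichotomy u v with h | h | h
  · have hne : ¬ v < u := lt_asymm h
    simp only [adj, kill, dif_pos h]
    by_cases hu : u = v' <;> by_cases hv : v = v' <;>
      simp [inc, hu, hv]
  · subst h
    simp [adj, lt_irrefl]
  · have hne : ¬ u < v := lt_asymm h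
    simp only [adj, kill, dif_neg hne, dif_pos h]
    by_cases hu : u = v' <;> by_cases hv : v = v' <;>
      simp [inc, hu, hv]

lemma adjDel_iff {n : ℕ} (ω : EdgeIdx n → Bool) (v' u v : Fin n) :
    adjDel ω v' u v ↔ adj (kill v' ω) u v := by
  rw [adj_kill]
  exact Iff.rfl

lemma degDel_eq {n : ℕ} (ω : EdgeIdx n → Bool) (v' v : Fin n) :
    degDel ω v' v = deg (kill v' ω) v := by
  unfold degDel deg
  congr 1
  exact Finset.filter_congr fun x _ => adjDel_iff ω v' v x

lemma isolCountDel_eq {n : ℕ} (ω : EdgeIdx n → Bool) (v' : Fin n) :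
    isolCountDel ω v' = isolCount (kill v' ω) := by
  unfold isolCountDel isolCount
  congr 1
  exact Finset.filter_congr fun x _ => by rw [degDel_eq]

lemma deg_zero_iff {n : ℕ} (ω : EdgeIdx n → Bool) (v : Fin n) :
    deg ω v = 0 ↔ ∀ e : EdgeIdx n, inc v e → ω e = false := by
  unfold deg
  rw [Finset.card_eq_zero, Finset.filter_eq_empty_iff]
  constructor
  · intro h e he
    obtain ⟨⟨a, b⟩, hab⟩ := e
    replace he : a = v ∨ b = v := he
    obtain h1 | h2 := he
    · subst h1
      have hb := h (Finset.mem_univ b)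
      unfold adj at hb
      rw [dif_pos hab] at hb
      simpa using hb
    · subst h2
      have ha := h (Finset.mem_univ a)
      unfold adj at ha
      rw [dif_neg (lt_asymm hab), dif_pos hab] at ha
      simpa using ha
  · intro h x _ hadj
    unfold adj at hadj
    split_ifs at hadj with h1 h2
    · rw [h ⟨(v, x), h1⟩ (Or.inl rfl)] at hadj
      simp at hadj
    · rw [h ⟨(x, v), h2⟩ (Or.inr rfl)] at hadj
      simp at hadj

lemma kill_eq_self {n : ℕ} {ω : EdgeIdx n → Bool} {v : Fin n} (h : deg ω v = 0) :
    kill v ω = ω := by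
  rw [deg_zero_iff] at h
  funext e
  by_cases he : inc v e
  · simp [kill, he, h e he]
  · simp [kill, he]

lemma kill_idem {n : ℕ} (v : Fin n) (ω : EdgeIdx n → Bool) :
    kill v (kill v ω) = kill v ω := by
  funext e
  by_cases he : inc v e <;> simp [kill, he]

lemma card_inc {n : ℕ} (v : Fin n) :
    Fintype.card {e : EdgeIdx n // inc v e} = n - 1 := by
  rw [Fintype.card_subtype]
  have hcard : (Finset.univ.filter fun e : EdgeIdx n => inc v e).card
      = ((Finset.univ : Finset (Fin n)).erase v).card := by
    refine Finset.card_bij' (fun e _ => if e.1.1 = v then e.1.2 else e.1.1)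
      (fun u hu => if h : v < u then ⟨(v, u), h⟩
        else ⟨(u, v), lt_of_le_of_ne (not_lt.mp h) (Finset.ne_of_mem_erase hu)⟩)
      ?_ ?_ ?_ ?_
    · rintro ⟨⟨a, b⟩, hab⟩ he
      simp only [Finset.mem_filter, Finset.mem_univ, true_and] at he
      replace he : a = v ∨ b = v := he
      replace hab : a < b := hab
      dsimp only
      rw [Finset.mem_erase]
      refine ⟨?_, Finset.mem_univ _⟩
      split_ifs with h1
      · subst h1
        exact ne_of_gt hab
      · exact h1
    · intro u hu
      simp only [Finset.mem_filter, Finset.mem_univ, true_and]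
      by_cases h : v < u
      · rw [dif_pos h]
        exact Or.inl rfl
      · rw [dif_neg h]
        exact Or.inr rfl
    · rintro ⟨⟨a, b⟩, hab⟩ he
      simp only [Finset.mem_filter, Finset.mem_univ, true_and] at he
      replace he : a = v ∨ b = v := he
      replace hab : a < b := hab
      dsimp only
      split_ifs with h1 hh hh
      · subst h1
        rfl
      · subst h1
        exact absurd hab hh
      · exact absurd hh (lt_asymm (he.resolve_left h1 ▸ hab))
      · have h3 : b = v := he.resolve_left h1
        subst h3
        rfl
    · intro u hu
      have hne : u ≠ v := Finset.ne_of_mem_erase hu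
      split_ifs with h h2 h2 <;>
        first
          | rfl
          | exact absurd rfl h2
          | exact absurd h2 hne
  rw [hcard, Finset.card_erase_of_mem (Finset.mem_univ v), Finset.card_univ, Fintype.card_fin]

/-- The key size-biasing identity for one vertex. -/
lemma key {n : ℕ} (p : ℝ) (v : Fin n) (h : (EdgeIdx n → Bool) → ℝ) :
    ∑ ω : EdgeIdx n → Bool, (if deg ω v = 0 then W p ω * h ω else 0)
      = (1 - p) ^ (n - 1) * ∑ ω : EdgeIdx n → Bool, W p ω * h (kill v ω) := by
  classical
  set Φ := (Equiv.piEquivPiSubtypeProd (fun e : EdgeIdx n => inc v e) (fun _ => Bool)).symm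
    with hΦ
  have hsymm : ∀ (x : ({e : EdgeIdx n // inc v e} → Bool) × ({e : EdgeIdx n // ¬ inc v e} → Bool))
      (e : EdgeIdx n), Φ x e = if he : inc v e then x.1 ⟨e, he⟩ else x.2 ⟨e, he⟩ := by
    intro x e
    rw [hΦ, Equiv.piEquivPiSubtypeProd_symm_apply]
  have hW : ∀ a b, W p (Φ (a, b)) =
      (∏ s : {e : EdgeIdx n // inc v e}, w p (a s)) *
      (∏ s : {e : EdgeIdx n // ¬ inc v e}, w p (b s)) := by
    intro a b
    rw [W, ← Fintype.prod_subtype_mul_prod_subtype (fun e : EdgeIdx n => inc v e)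
      (fun e => w p (Φ (a, b) e))]
    congr 1
    · exact Finset.prod_congr rfl fun s _ => by rw [hsymm, dif_pos s.2]
    · exact Finset.prod_congr rfl fun s _ => by rw [hsymm, dif_neg s.2]
  have hkill : ∀ a b, kill v (Φ (a, b)) = Φ (fun _ => false, b) := by
    intro a b
    funext e
    by_cases he : inc v e
    · rw [hsymm, dif_pos he]
      simp [kill, he]
    · rw [hsymm, dif_neg he]
      simp [kill, he, hsymm]
  have hdeg : ∀ a b, deg (Φ (a, b)) v = 0 ↔ a = fun _ => false := by
    intro a b
    rw [deg_zero_iff]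
    constructor
    · intro hz
      funext s
      have := hz s.1 s.2
      rwa [hsymm, dif_pos s.2] at this
    · intro ha e he
      rw [hsymm, dif_pos he, ha]
  have hWA : (∏ _s : {e : EdgeIdx n // inc v e}, w p false) = (1 - p) ^ (n - 1) := by
    rw [Finset.prod_const, Finset.card_univ, card_inc v]
    simp [w]
  rw [← Equiv.sum_comp Φ (fun ω => if deg ω v = 0 then W p ω * h ω else 0),
      ← Equiv.sum_comp Φ (fun ω => W p ω * h (kill v ω)),
      Fintype.sum_prod_type, Fintype.sum_prod_type]
  have hL : ∀ a : {e : EdgeIdx n // inc v e} → Bool,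
      (∑ b, if deg (Φ (a, b)) v = 0 then W p (Φ (a, b)) * h (Φ (a, b)) else 0)
      = if a = (fun _ => false) then
          ∑ b, W p (Φ (a, b)) * h (Φ (a, b)) else 0 := by
    intro a
    by_cases ha : a = fun _ => false
    · rw [if_pos ha]
      exact Finset.sum_congr rfl fun b _ => if_pos ((hdeg a b).mpr ha)
    · rw [if_neg ha]
      exact Finset.sum_eq_zero fun b _ => if_neg fun hc => ha ((hdeg a b).mp hc)
  simp only [hL]
  rw [Finset.sum_ite_eq' Finset.univ (fun _ => false)
    (fun a => ∑ b, W p (Φ (a, b)) * h (Φ (a, b))), if_pos (Finset.mem_univ _)]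
  have hR : ∀ a b, W p (Φ (a, b)) * h (kill v (Φ (a, b)))
      = (∏ s : {e : EdgeIdx n // inc v e}, w p (a s)) *
        ((∏ s : {e : EdgeIdx n // ¬ inc v e}, w p (b s)) * h (Φ (fun _ => false, b))) := by
    intro a b
    rw [hW, hkill, mul_assoc]
  simp only [hR]
  have hsum : ∀ a : {e : EdgeIdx n // inc v e} → Bool,
      (∑ b, (∏ s : {e : EdgeIdx n // inc v e}, w p (a s)) *
        ((∏ s : {e : EdgeIdx n // ¬ inc v e}, w p (b s)) * h (Φ (fun _ => false, b))))
      = (∏ s : {e : EdgeIdx n // inc v e}, w p (a s)) *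
        (∑ b, (∏ s : {e : EdgeIdx n // ¬ inc v e}, w p (b s)) * h (Φ (fun _ => false, b))) :=
    fun a => (Finset.mul_sum _ _ _).symm
  simp only [hsum]
  rw [← Finset.sum_mul, sum_W_eq_one p, one_mul]
  have hLfinal : ∀ b, W p (Φ (fun _ => false, b)) * h (Φ (fun _ => false, b))
      = (1 - p) ^ (n - 1) *
        ((∏ s : {e : EdgeIdx n // ¬ inc v e}, w p (b s)) * h (Φ (fun _ => false, b))) := by
    intro b
    rw [hW, hWA, mul_assoc]
  simp only [hLfinal]
  rw [← Finset.mul_sum]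

lemma isolCount_cast {n : ℕ} (ω : EdgeIdx n → Bool) :
    (isolCount ω : ℝ) = ∑ v : Fin n, (if deg ω v = 0 then (1 : ℝ) else 0) := by
  unfold isolCount
  rw [Finset.card_filter]
  push_cast
  exact Finset.sum_congr rfl fun v _ => by split <;> simp

lemma mono_isol {n : ℕ} (ω : EdgeIdx n → Bool) (v : Fin n) :
    isolCount ω ≤ isolCountDel ω v := by
  unfold isolCount isolCountDel
  apply Finset.card_le_card
  intro u hu
  simp only [Finset.mem_filter, Finset.mem_univ, true_and] at *
  have hle : degDel ω v u ≤ deg ω u := by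
    unfold degDel deg
    apply Finset.card_le_card
    intro x hx
    simp only [Finset.mem_filter, Finset.mem_univ, true_and] at *
    obtain ⟨h1, -, -⟩ := hx
    exact h1
  omega

/-- deleting all edges incident to an independent uniformly chosen vertex
produces a size biased version of the number of isolated vertices, and the coupling is
monotone. -/
theorem size_bias_coupling_isolated (n : ℕ) (hn : 2 ≤ n) (p : ℝ)
    (hp : p ∈ Set.Ioo (0 : ℝ) 1)
    (μ : ℝ) (hμ : μ = (n : ℝ) * (1 - p) ^ (n - 1)) :
    (∫ ω, (isolCount ω : ℝ) ∂(gnp n p)) = μ ∧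
    (∀ f : ℝ → ℝ, Measurable f → (∃ C, ∀ x, |f x| ≤ C) →
      ∫ ω, (isolCount ω : ℝ) * f (isolCount ω) ∂(gnp n p)
        = μ * ∫ x, f (isolCountDel x.1 x.2) ∂(gnpV n p)) ∧
    (∀ᵐ x ∂(gnpV n p), (isolCount x.1 : ℝ) ≤ (isolCountDel x.1 x.2 : ℝ)) := by

  obtain ⟨hp0, hp1⟩ := hp
  have hp0' : (0:ℝ) ≤ p := le_of_lt hp0
  have hp1' : p ≤ 1 := le_of_lt hp1
  have hn0 : (n : ℝ) ≠ 0 := Nat.cast_ne_zero.mpr (by omega)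
  have hpart1 : (∫ ω, (isolCount ω : ℝ) ∂(gnp n p)) = μ := by
    rw [integral_gnp hp0' hp1']
    have hexp : ∀ ω : EdgeIdx n → Bool, W p ω * (isolCount ω : ℝ)
        = ∑ v : Fin n, (if deg ω v = 0 then W p ω * 1 else 0) := by
      intro ω
      rw [isolCount_cast, Finset.mul_sum]
      exact Finset.sum_congr rfl fun v _ => by split <;> simp
    simp only [hexp]
    rw [Finset.sum_comm]
    have hkey : ∀ v : Fin n, (∑ ω : EdgeIdx n → Bool, if deg ω v = 0 then W p ω * 1 else 0)
        = (1-p)^(n-1) := by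
      intro v
      rw [key p v (fun _ => 1)]
      have hone : (∑ ω : EdgeIdx n → Bool, W p ω * 1) = 1 := by
        simpa [W] using sum_W_eq_one (ι := EdgeIdx n) p
      rw [hone, mul_one]
    simp only [hkey]
    rw [Finset.sum_const, Finset.card_univ, Fintype.card_fin, hμ, nsmul_eq_mul]
  refine ⟨hpart1, ?_, ?_⟩
  · intro f hf hbdd
    rw [integral_gnp hp0' hp1', integral_gnpV (by omega : 0 < n) hp0' hp1']
    have hLHS : ∀ ω : EdgeIdx n → Bool,
        W p ω * ((isolCount ω : ℝ) * f (isolCount ω))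
        = ∑ v : Fin n, (if deg ω v = 0 then W p ω * f (isolCount (kill v ω)) else 0) := by
      intro ω
      have hy := isolCount_cast ω
      calc W p ω * ((isolCount ω : ℝ) * f (isolCount ω))
          = ∑ u : Fin n, (if deg ω u = 0 then (1:ℝ) else 0) * (W p ω * f (isolCount ω)) := by
            rw [← Finset.sum_mul, ← hy]; ring
        _ = ∑ u : Fin n, (if deg ω u = 0 then W p ω * f (isolCount (kill u ω)) else 0) := by
            refine Finset.sum_congr rfl fun u _ => ?_
            by_cases hd : deg ω u = 0
            · rw [if_pos hd, if_pos hd, kill_eq_self hd, one_mul]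
            · rw [if_neg hd, if_neg hd, zero_mul]
    simp only [hLHS]
    conv_lhs => rw [Finset.sum_comm]
    have hkey : ∀ v : Fin n,
        (∑ ω : EdgeIdx n → Bool, if deg ω v = 0 then W p ω * f (isolCount (kill v ω)) else 0)
        = (1-p)^(n-1) * ∑ ω : EdgeIdx n → Bool, W p ω * f (isolCountDel ω v) := by
      intro v
      rw [key p v (fun ω => f (isolCount (kill v ω)))]
      congr 1
      refine Finset.sum_congr rfl fun ω _ => ?_
      rw [kill_idem, isolCountDel_eq]
    simp only [hkey]
    rw [← Finset.mul_sum]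
    have hRHS : (∑ ω : EdgeIdx n → Bool, ∑ v : Fin n,
          (n : ℝ)⁻¹ * (W p ω * f (isolCountDel ω v)))
        = (n : ℝ)⁻¹ * ∑ v : Fin n, ∑ ω : EdgeIdx n → Bool,
          W p ω * f (isolCountDel ω v) := by
      rw [Finset.sum_comm]
      simp only [← Finset.mul_sum]
    rw [hRHS, hμ]
    field_simp
  · refine Filter.Eventually.of_forall ?_
    rintro ⟨ω, v⟩
    exact_mod_cast mono_isol ω v


end ErdosRenyiIsolated
end
end

section
/- Let K be the Erdős–Rényi random graph G(n,p) with n ≥ 2 and p ∈ (0,1), let V' be a vertex chosen uniformly at random independent of K, let Y be the number of isolated vertices of K and Y^s the number of isolated vertices of the graph obtained by deleting all edges incident to V'. Then the conditional expectation satisfies E(Y^s − Y | K) ≤ 2 almost surely. -/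
open MeasureTheory ProbabilityTheory Real Finset

noncomputable section

namespace ErdosRenyiIsolated

/- ==================== auxiliary lemmas ==================== -/

section Aux

variable {n : ℕ}

lemma degDel_zero_cases (ω : EdgeIdx n → Bool) (v' v : Fin n)
    (h : degDel ω v' v = 0) (hd : deg ω v ≠ 0) (hv : v ≠ v') :
    deg ω v = 1 ∧ adj ω v v' := by
  rw [degDel, Finset.card_eq_zero, Finset.filter_eq_empty_iff] at h
  have hall : ∀ w, adj ω v w → w = v' := by
    intro w hw
    by_contra hw'
    exact h (Finset.mem_univ w) ⟨hw, hv, hw'⟩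
  have hsub : (Finset.univ.filter fun w => adj ω v w) ⊆ {v'} := by
    intro w hw
    simp only [Finset.mem_filter] at hw
    simp [hall w hw.2]
  have hd' : (Finset.univ.filter fun w => adj ω v w).Nonempty :=
    Finset.card_pos.mp (Nat.pos_of_ne_zero hd)
  obtain ⟨w, hw'⟩ := hd'
  have hw : adj ω v w := (Finset.mem_filter.mp hw').2
  have hwv : w = v' := hall w hw
  constructor
  · rw [deg]
    refine le_antisymm (le_trans (Finset.card_le_card hsub) (by simp)) ?_
    rw [Nat.one_le_iff_ne_zero, ← Nat.pos_iff_ne_zero, Finset.card_pos]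
    exact ⟨w, by simp [hw]⟩
  · rwa [hwv] at hw

lemma isolCountDel_le (ω : EdgeIdx n → Bool) (v' : Fin n) :
    isolCountDel ω v' ≤ isolCount ω + 1 +
      (Finset.univ.filter fun v => deg ω v = 1 ∧ adj ω v v').card := by
  have hsub : (Finset.univ.filter fun v => degDel ω v' v = 0) ⊆
      ((Finset.univ.filter fun v => deg ω v = 0) ∪ {v'}) ∪
        (Finset.univ.filter fun v => deg ω v = 1 ∧ adj ω v v') := by
    intro v hv
    simp only [Finset.mem_filter, Finset.mem_univ, true_and] at hv
    by_cases h0 : deg ω v = 0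
    · simp [h0]
    · by_cases hvv : v = v'
      · simp [hvv]
      · have := degDel_zero_cases ω v' v hv h0 hvv
        simp [this.1, this.2]
  calc isolCountDel ω v' ≤ _ := Finset.card_le_card hsub
    _ ≤ ((Finset.univ.filter fun v => deg ω v = 0) ∪ {v'}).card +
        (Finset.univ.filter fun v => deg ω v = 1 ∧ adj ω v v').card :=
        Finset.card_union_le _ _
    _ ≤ isolCount ω + 1 + _ := by
        refine add_le_add_left ?_ _
        refine le_trans (Finset.card_union_le _ _) ?_
        simp [isolCount]

lemma sum_filter_deg_one (ω : EdgeIdx n → Bool) :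
    (∑ v' : Fin n, (Finset.univ.filter fun v => deg ω v = 1 ∧ adj ω v v').card) ≤ n := by
  have h1 : ∀ v' : Fin n, (Finset.univ.filter fun v => deg ω v = 1 ∧ adj ω v v').card
      = ∑ v : Fin n, if deg ω v = 1 ∧ adj ω v v' then 1 else 0 := by
    intro v'; rw [Finset.card_filter]
  simp_rw [h1]
  rw [Finset.sum_comm]
  have h2 : ∀ v : Fin n, (∑ v' : Fin n, if deg ω v = 1 ∧ adj ω v v' then 1 else 0) ≤ 1 := by
    intro v
    by_cases hd : deg ω v = 1
    · have : (∑ v' : Fin n, if deg ω v = 1 ∧ adj ω v v' then 1 else 0)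
          = ∑ v' : Fin n, if adj ω v v' then 1 else 0 := by
        refine Finset.sum_congr rfl fun v' _ => by simp [hd]
      rw [this, ← Finset.card_filter]
      exact le_of_eq hd
    · simp [hd]
  calc (∑ v : Fin n, ∑ v' : Fin n, if deg ω v = 1 ∧ adj ω v v' then 1 else 0)
      ≤ ∑ _v : Fin n, 1 := Finset.sum_le_sum fun v _ => h2 v
    _ = n := by simp

lemma sum_isolCountDel_le (ω : EdgeIdx n → Bool) :
    (∑ v' : Fin n, isolCountDel ω v') ≤ n * isolCount ω + 2 * n := by
  calc (∑ v' : Fin n, isolCountDel ω v')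
      ≤ ∑ v' : Fin n, (isolCount ω + 1 +
          (Finset.univ.filter fun v => deg ω v = 1 ∧ adj ω v v').card) :=
        Finset.sum_le_sum fun v' _ => isolCountDel_le ω v'
    _ = n * (isolCount ω + 1) +
          ∑ v' : Fin n, (Finset.univ.filter fun v => deg ω v = 1 ∧ adj ω v v').card := by
        rw [Finset.sum_add_distrib, Finset.sum_const, Finset.card_univ, Fintype.card_fin,
          smul_eq_mul]
    _ ≤ n * (isolCount ω + 1) + n := add_le_add_right (sum_filter_deg_one ω) _
    _ = n * isolCount ω + 2 * n := by ring

lemma key_real_bound (hn : 0 < n) (ω : EdgeIdx n → Bool) :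
    (∑ v' : Fin n, ((isolCountDel ω v' : ℝ) - (isolCount ω : ℝ))) / n ≤ 2 := by
  rw [div_le_iff₀ (by positivity)]
  have h := sum_isolCountDel_le ω
  have h' : (∑ v' : Fin n, (isolCountDel ω v' : ℝ)) ≤ n * isolCount ω + 2 * n := by
    have := (Nat.cast_le (α := ℝ)).2 h
    push_cast at this
    simpa using this
  have : (∑ v' : Fin n, ((isolCountDel ω v' : ℝ) - (isolCount ω : ℝ)))
      = (∑ v' : Fin n, (isolCountDel ω v' : ℝ)) - n * isolCount ω := by
    rw [Finset.sum_sub_distrib, Finset.sum_const, Finset.card_univ, Fintype.card_fin]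
    ring_nf
  rw [this]
  linarith

lemma integral_uniform (hn : 0 < n) (f : Fin n → ℝ) :
    ∫ y, f y ∂(uniformOn (Set.univ : Set (Fin n))) = (∑ y, f y) / n := by
  rw [uniformOn, ProbabilityTheory.cond, Measure.restrict_univ, Measure.count_univ,
    integral_smul_measure, integral_fintype (Integrable.of_finite)]
  simp only [Measure.real, Measure.count_singleton, ENNReal.toReal_one, one_smul]
  rw [ENat.card_eq_coe_fintype_card, Fintype.card_fin, ENat.toENNReal_coe, ENNReal.toReal_inv,
    ENNReal.toReal_natCast, smul_eq_mul, inv_mul_eq_div]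

end Aux

/-- the conditional expectation of `Y^s - Y` given the graph `K` is at most
`2` almost surely. -/
theorem condexp_size_bias_diff_le_two (n : ℕ) (hn : 2 ≤ n) (p : ℝ)
    (hp : p ∈ Set.Ioo (0 : ℝ) 1) :
    ∀ᵐ x ∂(gnpV n p),
      (MeasureTheory.condExp (MeasurableSpace.comap Prod.fst inferInstance) (gnpV n p)
        fun x => (isolCountDel x.1 x.2 : ℝ) - (isolCount x.1 : ℝ)) x ≤ 2 := by
  have hn0 : 0 < n := lt_of_lt_of_le (by norm_num) hn
  haveI hne : Nonempty (Fin n) := ⟨⟨0, hn0⟩⟩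
  -- probability measure instances
  haveI hbern : IsProbabilityMeasure (bern p) := by
    constructor
    rw [bern]
    simp only [Measure.coe_add, Measure.coe_smul, Pi.add_apply, Pi.smul_apply,
      Measure.dirac_apply' _ MeasurableSet.univ]
    simp only [Set.indicator_univ, Pi.one_apply, smul_eq_mul, mul_one]
    rw [← ENNReal.ofReal_add hp.1.le (by linarith [hp.2])]
    norm_num
  haveI hgnp : IsProbabilityMeasure (gnp n p) := by
    rw [gnp]; exact MeasureTheory.Measure.pi.instIsProbabilityMeasure _
  haveI hunif : IsProbabilityMeasure (uniformOn (Set.univ : Set (Fin n))) :=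
    uniformOn_isProbabilityMeasure Set.finite_univ Set.univ_nonempty
  haveI hgnpV : IsProbabilityMeasure (gnpV n p) := by
    unfold gnpV; infer_instance
  have hm : MeasurableSpace.comap (Prod.fst : (EdgeIdx n → Bool) × Fin n → _) inferInstance
      ≤ Prod.instMeasurableSpace := measurable_fst.comap_le
  set f : (EdgeIdx n → Bool) × Fin n → ℝ :=
    fun x => (isolCountDel x.1 x.2 : ℝ) - (isolCount x.1 : ℝ) with hf_def
  set g : (EdgeIdx n → Bool) × Fin n → ℝ :=
    fun x => (∑ v' : Fin n, ((isolCountDel x.1 v' : ℝ) - (isolCount x.1 : ℝ))) / n with hg_def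
  haveI : SigmaFinite ((gnpV n p).trim hm) := inferInstance
  have hfint : Integrable f (gnpV n p) := Integrable.of_finite
  have hgint : Integrable g (gnpV n p) := Integrable.of_finite
  have hgcond : g =ᵐ[gnpV n p] MeasureTheory.condExp (MeasurableSpace.comap Prod.fst inferInstance) (gnpV n p) f := by
    refine ae_eq_condExp_of_forall_setIntegral_eq hm hfint
      (fun s _ _ => hgint.integrableOn)
      (fun s hs _ => ?_) ?_
    · -- set integral equality
      obtain ⟨t, ht, rfl⟩ := hs
      have hts : Prod.fst ⁻¹' t = t ×ˢ (Set.univ : Set (Fin n)) := by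
        ext x; simp [Set.mem_prod]
      rw [hts, gnpV, setIntegral_prod _ (Integrable.integrableOn Integrable.of_finite),
        setIntegral_prod _ (Integrable.integrableOn Integrable.of_finite)]
      refine setIntegral_congr_fun ht fun ω _ => ?_
      simp only [hg_def, hf_def, Measure.restrict_univ]
      rw [integral_const, integral_uniform hn0]
      simp
    · -- m-measurability of g
      refine StronglyMeasurable.aestronglyMeasurable ?_
      have hfst : Measurable[MeasurableSpace.comap Prod.fst inferInstance]
          (Prod.fst : (EdgeIdx n → Bool) × Fin n → EdgeIdx n → Bool) :=
        Measurable.of_comap_le le_rfl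
      have hG : Measurable (fun ω : EdgeIdx n → Bool =>
          (∑ v' : Fin n, ((isolCountDel ω v' : ℝ) - (isolCount ω : ℝ))) / n) :=
        measurable_of_countable _
      exact (hG.comp hfst).stronglyMeasurable
  filter_upwards [hgcond] with x hx
  rw [← hx, hg_def]
  exact key_real_bound hn0 x.1

end ErdosRenyiIsolated
end
end
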